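/- Let φ : B(H) → B(H) satisfy: for all A, B there exists a unitary U with φ(A)φ(B) = U(AB)U*. If P₁, P₂ are non-orthogonal rank-one projections (tr(P₁P₂) > 0) and Q₁, Q₂ are rank-one projections with φ(P₁) = Q₁ and φ(P₂) = −Q₂, then a contradiction follows; hence φ cannot send one non-orthogonal rank-one projection to a projection and another to the negative of a projection. -/

import Mathlib

/-- If for all `A, B` there is a unitary `U` with `φ(A)φ(B) = U (AB) U*`, then `φ`
cannot send one of two non-orthogonal rank-one projections to a rank-one projection
and the other to the negative of a rank-one projection. -/
theorem stmt19 {H : Type*} [NormedAddCommGroup H] [InnerProductSpace ℂ H] [CompleteSpace H]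
    (φ : (H →L[ℂ] H) → (H →L[ℂ] H))
    (hφ : ∀ A B : H →L[ℂ] H, ∃ U : H →L[ℂ] H,
      U ∈ unitary (H →L[ℂ] H) ∧ φ A * φ B = U * (A * B) * star U)
    (x₁ x₂ y₁ y₂ : H) (hx₁ : ‖x₁‖ = 1) (hx₂ : ‖x₂‖ = 1)
    (hy₁ : ‖y₁‖ = 1) (hy₂ : ‖y₂‖ = 1)
    (horth : (inner ℂ x₁ x₂ : ℂ) ≠ 0)
    (h1 : φ ((innerSL ℂ x₁).smulRight x₁) = (innerSL ℂ y₁).smulRight y₁)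
    (h2 : φ ((innerSL ℂ x₂).smulRight x₂) = -((innerSL ℂ y₂).smulRight y₂)) :
    False := by
  obtain ⟨U, hU, heq⟩ := hφ ((innerSL ℂ x₁).smulRight x₁) ((innerSL ℂ x₂).smulRight x₂)
  rw [h1, h2] at heq
  have hsU : star U * U = 1 := (Unitary.mem_iff.mp hU).1
  have hfix : star U (U x₁) = x₁ := by
    have := congrArg (fun T : H →L[ℂ] H => T x₁) hsU
    simpa [ContinuousLinearMap.mul_apply] using this
  have key := congrArg (fun T : H →L[ℂ] H => T (U x₁)) heq
  simp only [ContinuousLinearMap.mul_apply, ContinuousLinearMap.neg_apply,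
    ContinuousLinearMap.smulRight_apply, innerSL_apply_apply, hfix, map_neg, map_smul,
    inner_smul_right, inner_neg_right, smul_smul] at key
  -- key : -((⟪y₂,Ux₁⟫ * ⟪y₁,y₂⟫) • y₁) = (⟪x₂,x₁⟫ * ⟪x₁,x₂⟫) • U x₁
  set t : ℂ := inner ℂ x₁ x₂ with ht
  set a : ℂ := inner ℂ y₂ (U x₁) with ha
  set b : ℂ := inner ℂ y₁ y₂ with hb
  have hts : (inner ℂ x₂ x₁ : ℂ) = starRingEnd ℂ t := (inner_conj_symm x₂ x₁).symm
  have hbs : (inner ℂ y₂ y₁ : ℂ) = starRingEnd ℂ b := (inner_conj_symm y₂ y₁).symm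
  have hc : starRingEnd ℂ t * t = (Complex.normSq t : ℂ) := by
    rw [Complex.normSq_eq_conj_mul_self]
  -- take inner product with y₂
  have key2 := congrArg (fun v => (inner ℂ y₂ v : ℂ)) key
  simp only [inner_smul_right, inner_neg_right, hbs, hts, ← ha] at key2
  -- key2 : -(a * b * conj b) = conj t * t * a
  have ha0 : a = 0 := by
    have hsum : (starRingEnd ℂ t * t + b * starRingEnd ℂ b) ≠ 0 := by
      rw [hc, Complex.mul_conj]
      rw [← Complex.ofReal_add]
      simp only [ne_eq, Complex.ofReal_eq_zero]
      have h1 : 0 < Complex.normSq t := Complex.normSq_pos.mpr horth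
      have h2 : 0 ≤ Complex.normSq b := Complex.normSq_nonneg b
      intro h; linarith [h1, h2]
    have : a * (starRingEnd ℂ t * t + b * starRingEnd ℂ b) = 0 := by ring_nf; linear_combination -key2
    exact (mul_eq_zero.mp this).resolve_right hsum
  rw [ha0] at key
  simp only [zero_mul, neg_zero, zero_smul] at key
  have hUx : U x₁ = 0 := by
    have hcne : (inner ℂ x₂ x₁ : ℂ) * t ≠ 0 :=
      mul_ne_zero (by rw [hts]; simpa using horth) horth
    exact (smul_eq_zero.mp key.symm).resolve_left hcne
  have hx0 : x₁ = 0 := by rw [← hfix, hUx, map_zero]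
  rw [hx0, norm_zero] at hx₁
  exact zero_ne_one hx₁
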